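/- Let n ≥ 1, k ≥ 1, and h ∈ {0, 1, …, 2n − 1}. Then the number of k-colored perfect matchings (f, c) on ℤ/2nℤ satisfying f(h − x) = h − f(x) and c(h − x) = c(x) for all x ∈ ℤ/2nℤ equals Σ_{j=0}^{⌊n/2⌋} ma(n, j)·2^j·k^{n−j} if h is odd, and equals Σ_{j=0}^{⌊(n−1)/2⌋} ma(n−1, j)·2^j·k^{n−j} if h is even. -/

import Mathlib

/-- `ma m j` is the number of `j`-matchings of an `m`-element set. -/
def ma (m j : ℕ) : ℕ := m.factorial / ((m - 2 * j).factorial * 2 ^ j * j.factorial)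

/-- `dd j = (2j-1)!!`. -/
def dd : ℕ → ℕ
  | 0 => 1
  | j+1 => (2*j+1) * dd j

lemma fact_two_mul (j : ℕ) : (2*j).factorial = 2^j * j.factorial * dd j := by
  induction j with
  | zero => simp [dd]
  | succ i ih =>
    have h : 2*(i+1) = (2*i+1)+1 := by ring
    rw [h, Nat.factorial_succ, show 2*i+1 = (2*i)+1 from rfl, Nat.factorial_succ,
        Nat.factorial_succ i, ih, dd]
    ring

lemma ma_eq {m j : ℕ} (h : 2*j ≤ m) : ma m j = m.choose (2*j) * dd j := by
  have h1 := Nat.choose_mul_factorial_mul_factorial h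
  have hpos : 0 < (m - 2*j).factorial * 2^j * j.factorial := by positivity
  unfold ma
  rw [← h1, fact_two_mul]
  rw [show m.choose (2*j) * (2^j * j.factorial * dd j) * (m-2*j).factorial
      = (m.choose (2*j) * dd j) * ((m - 2*j).factorial * 2^j * j.factorial) by ring]
  exact Nat.mul_div_cancel _ hpos

lemma ma_zero (m : ℕ) : ma m 0 = 1 := by
  rw [ma_eq (by omega)]; simp [dd]

lemma ma_rec {m j : ℕ} (hj : 2*(j+1) ≤ m+1) :
    ma (m+2) (j+1) = ma (m+1) (j+1) + (m+1) * ma m j := by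
  rw [ma_eq (by omega), ma_eq (by omega), ma_eq (by omega)]
  have hp : (m+2).choose (2*(j+1)) = (m+1).choose (2*j+1) + (m+1).choose (2*(j+1)) := by
    rw [show 2*(j+1) = (2*j+1)+1 by ring]
    exact Nat.choose_succ_succ _ _
  have hs : (m+1).choose (2*j+1) * (2*j+1) = (m+1) * m.choose (2*j) := by
    have := Nat.add_one_mul_choose_eq m (2*j)
    omega
  have hd : dd (j+1) = (2*j+1) * dd j := rfl
  calc (m+2).choose (2*(j+1)) * dd (j+1)
      = (m+1).choose (2*j+1) * (2*j+1) * dd j + (m+1).choose (2*(j+1)) * dd (j+1) := by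
        rw [hp, hd]; ring
    _ = (m+1).choose (2*(j+1)) * dd (j+1) + (m+1) * (m.choose (2*j) * dd j) := by
        rw [hs]; ring

lemma ma_top (j : ℕ) : ma (2*(j+1)) (j+1) = (2*j+1) * ma (2*j) j := by
  rw [ma_eq (le_refl _), ma_eq (le_refl _), Nat.choose_self, Nat.choose_self]
  show 1 * ((2*j+1) * dd j) = (2*j+1) * (1 * dd j)
  ring

def A (k m : ℕ) : ℕ := ∑ j ∈ Finset.range (m / 2 + 1), ma m j * 2 ^ j * k ^ (m - j)

lemma A_zero (k : ℕ) : A k 0 = 1 := by simp [A, ma_zero]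

lemma A_one (k : ℕ) : A k 1 = k := by simp [A, ma_zero]

private lemma sum_peel (g : ℕ → ℕ) (t : ℕ) :
    ∑ j ∈ Finset.range (t+2), g j = g 0 + (∑ i ∈ Finset.range t, g (i+1)) + g (t+1) := by
  rw [Finset.sum_range_succ, Finset.sum_range_succ']; ring

private lemma sum_peel1 (g : ℕ → ℕ) (t : ℕ) :
    ∑ j ∈ Finset.range (t+1), g j = g 0 + ∑ i ∈ Finset.range t, g (i+1) := by
  rw [Finset.sum_range_succ']; ring

lemma A_rec (k m : ℕ) : A k (m+2) = k * A k (m+1) + (m+1) * (2 * k * A k m) := by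
  rcases Nat.even_or_odd m with ⟨t, ht⟩ | ⟨t, ht⟩
  · -- m = 2t
    have hm : m = 2*t := by omega
    subst hm
    have HA2 : A k (2*t+2) = k^(2*t+2)
        + (∑ i ∈ Finset.range t, ma (2*t+2) (i+1) * 2^(i+1) * k^(2*t+2-(i+1)))
        + ma (2*t+2) (t+1) * 2^(t+1) * k^(2*t+2-(t+1)) := by
      rw [A, show (2*t+2)/2 + 1 = (t+1)+1 by omega, sum_peel]
      rw [ma_zero]; norm_num
    have HA1 : A k (2*t+1) = k^(2*t+1)
        + ∑ i ∈ Finset.range t, ma (2*t+1) (i+1) * 2^(i+1) * k^(2*t+1-(i+1)) := by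
      rw [A, show (2*t+1)/2 + 1 = t+1 by omega, sum_peel1]
      rw [ma_zero]; norm_num
    have HA0 : A k (2*t) = (∑ i ∈ Finset.range t, ma (2*t) i * 2^i * k^(2*t-i))
        + ma (2*t) t * 2^t * k^(2*t-t) := by
      rw [A, show (2*t)/2 + 1 = t+1 by omega, Finset.sum_range_succ]
    rw [HA2, HA1, HA0]
    have hterm : ∀ i ∈ Finset.range t,
        ma (2*t+2) (i+1) * 2^(i+1) * k^(2*t+2-(i+1))
        = k * (ma (2*t+1) (i+1) * 2^(i+1) * k^(2*t+1-(i+1)))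
          + (2*t+1) * (2*k) * (ma (2*t) i * 2^i * k^(2*t-i)) := by
      intro i hi
      simp only [Finset.mem_range] at hi
      rw [show (2*t+2) = (2*t)+2 from rfl, ma_rec (by omega)]
      rw [show 2*t+2-(i+1) = (2*t-i)+1 by omega, show 2*t+1-(i+1) = 2*t-i by omega,
          pow_succ]
      ring
    rw [Finset.sum_congr rfl hterm, Finset.sum_add_distrib]
    have htop : ma (2*t+2) (t+1) * 2^(t+1) * k^(2*t+2-(t+1))
        = (2*t+1) * (2*k) * (ma (2*t) t * 2^t * k^(2*t-t)) / 1 := by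
      rw [Nat.div_one, show (2*t+2) = 2*(t+1) by ring, ma_top,
          show 2*(t+1)-(t+1) = (2*t-t)+1+0 by omega, show 2*t-t = t by omega, pow_succ, pow_succ]
      ring
    rw [Nat.div_one] at htop
    rw [htop, ← Finset.mul_sum, ← Finset.mul_sum]
    ring
  · -- m = 2t+1
    have hm : m = 2*t+1 := by omega
    subst hm
    have HA2 : A k (2*t+1+2) = k^(2*t+3)
        + ∑ i ∈ Finset.range (t+1), ma (2*t+3) (i+1) * 2^(i+1) * k^(2*t+3-(i+1)) := by
      rw [A, show (2*t+1+2)/2 + 1 = (t+1)+1 by omega, show 2*t+1+2 = 2*t+3 by ring, sum_peel1]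
      rw [ma_zero]; norm_num
    have HA1 : A k (2*t+1+1) = k^(2*t+2)
        + ∑ i ∈ Finset.range (t+1), ma (2*t+2) (i+1) * 2^(i+1) * k^(2*t+2-(i+1)) := by
      rw [A, show (2*t+1+1)/2 + 1 = (t+1)+1 by omega, show 2*t+1+1 = 2*t+2 by ring, sum_peel1]
      rw [ma_zero]; norm_num
    have HA0 : A k (2*t+1) = ∑ i ∈ Finset.range (t+1), ma (2*t+1) i * 2^i * k^(2*t+1-i) := by
      rw [A, show (2*t+1)/2 + 1 = t+1 by omega]
    rw [HA2, HA1, HA0]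
    have hterm : ∀ i ∈ Finset.range (t+1),
        ma (2*t+3) (i+1) * 2^(i+1) * k^(2*t+3-(i+1))
        = k * (ma (2*t+2) (i+1) * 2^(i+1) * k^(2*t+2-(i+1)))
          + (2*t+1+1) * (2*k) * (ma (2*t+1) i * 2^i * k^(2*t+1-i)) := by
      intro i hi
      simp only [Finset.mem_range] at hi
      rw [show (2*t+3) = (2*t+1)+2 by ring, ma_rec (by omega)]
      rw [show 2*t+1+2-(i+1) = (2*t+1-i)+1 by omega, show 2*t+1+1-(i+1) = 2*t+1-i by omega,
          pow_succ]
      ring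
    rw [Finset.sum_congr rfl hterm, Finset.sum_add_distrib, ← Finset.mul_sum, ← Finset.mul_sum]
    ring

def MCond {γ : Type*} (σ : γ → γ) (k : ℕ) (fc : (γ → γ) × (γ → Fin k)) : Prop :=
  (∀ x, fc.1 (fc.1 x) = x) ∧ (∀ x, fc.1 x ≠ x) ∧ (∀ x, fc.2 (fc.1 x) = fc.2 x) ∧
  (∀ x, fc.1 (σ x) = σ (fc.1 x)) ∧ (∀ x, fc.2 (σ x) = fc.2 x)

abbrev Sg {γ : Type*} (σ : γ → γ) (k : ℕ) := {fc : (γ → γ) × (γ → Fin k) // MCond σ k fc}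

def SgEquiv {k : ℕ} {β γ : Type*} (e : β ≃ γ) (σβ : β → β) (σγ : γ → γ)
    (he : ∀ x, e (σβ x) = σγ (e x)) : Sg σγ k ≃ Sg σβ k where
  toFun := fun s => ⟨(fun x => e.symm (s.1.1 (e x)), fun x => s.1.2 (e x)), by
    obtain ⟨⟨F, C⟩, hs⟩ := s
    dsimp only [MCond] at hs ⊢
    obtain ⟨h1, h2, h3, h4, h5⟩ := hs
    have he' : ∀ y, e.symm (σγ y) = σβ (e.symm y) := by
      intro y
      rw [Equiv.symm_apply_eq, he, e.apply_symm_apply]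
    refine ⟨fun x => ?_, fun x hx => ?_, fun x => ?_, fun x => ?_, fun x => ?_⟩
    · simp only [Equiv.apply_symm_apply, h1, Equiv.symm_apply_apply]
    · exact h2 (e x) (by simpa using congrArg e hx)
    · simp only [Equiv.apply_symm_apply, h3]
    · simp only [he, h4, he']
    · simp only [he, h5]⟩
  invFun := fun s => ⟨(fun x => e (s.1.1 (e.symm x)), fun x => s.1.2 (e.symm x)), by
    obtain ⟨⟨F, C⟩, hs⟩ := s
    dsimp only [MCond] at hs ⊢
    obtain ⟨h1, h2, h3, h4, h5⟩ := hs
    have he' : ∀ y, e.symm (σγ y) = σβ (e.symm y) := by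
      intro y
      rw [Equiv.symm_apply_eq, he, e.apply_symm_apply]
    refine ⟨fun x => ?_, fun x hx => ?_, fun x => ?_, fun x => ?_, fun x => ?_⟩
    · simp only [Equiv.symm_apply_apply, h1, Equiv.apply_symm_apply]
    · exact h2 (e.symm x) (by simpa using congrArg e.symm hx)
    · simp only [Equiv.symm_apply_apply, h3]
    · rw [he', h4, he]
    · rw [he', h5]⟩
  left_inv := fun s => by ext <;> simp
  right_inv := fun s => by ext <;> simp

/-- the standard involution on `α × Bool`. -/
def tw {α : Type*} (p : α × Bool) : α × Bool := (p.1, !p.2)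

lemma tw_tw {α : Type*} (p : α × Bool) : tw (tw p) = p := by simp [tw]

lemma tw_ne {α : Type*} (p : α × Bool) : tw p ≠ p := by
  simp [tw, Prod.ext_iff]

section Restrict
variable {k : ℕ} {α : Type*} {p : α → Prop}

def restF (F : α × Bool → α × Bool) (hcl : ∀ x (b : Bool), p x → p ((F (x, b)).1)) :
    {x // p x} × Bool → {x // p x} × Bool :=
  fun y => (⟨(F (y.1.1, y.2)).1, hcl _ _ y.1.2⟩, (F (y.1.1, y.2)).2)

def restC (C : α × Bool → Fin k) : {x // p x} × Bool → Fin k := fun y => C (y.1.1, y.2)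

lemma restrict_cond {F : α × Bool → α × Bool} {C : α × Bool → Fin k}
    (hM : MCond tw k (F, C)) (hcl : ∀ x (b : Bool), p x → p ((F (x, b)).1)) :
    MCond tw k (restF F hcl, restC C) := by
  obtain ⟨h1, h2, h3, h4, h5⟩ := hM
  simp only [MCond] at h1 h2 h3 h4 h5 ⊢
  have htw : ∀ (x : α) (b : Bool), F (x, !b) = ((F (x, b)).1, !(F (x, b)).2) := by
    intro x b
    have := h4 (x, b)
    simpa [tw] using this
  refine ⟨fun y => ?_, fun y hy => ?_, fun y => ?_, fun y => ?_, fun y => ?_⟩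
  · obtain ⟨⟨x, hx⟩, b⟩ := y
    simp only [restF, Prod.mk.eta, h1]
  · obtain ⟨⟨x, hx⟩, b⟩ := y
    simp only [restF, Prod.mk.injEq, Subtype.mk.injEq] at hy
    exact h2 (x, b) (Prod.ext_iff.mpr hy)
  · obtain ⟨⟨x, hx⟩, b⟩ := y
    simp only [restF, restC, Prod.mk.eta, h3]
  · obtain ⟨⟨x, hx⟩, b⟩ := y
    simp only [restF, tw, htw]
  · obtain ⟨⟨x, hx⟩, b⟩ := y
    simp only [restC, tw, restF]
    have := h5 (x, b)
    simpa [tw] using this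

end Restrict
section Ext1
variable {k : ℕ} {α : Type*} [DecidableEq α]

omit [DecidableEq α] in
lemma sub_ne {a : α} (y : {x : α // x ≠ a}) : ((y : α) = a) ↔ False := by simp [y.2]

def ext1F (a : α) (G : {x : α // x ≠ a} × Bool → {x : α // x ≠ a} × Bool) :
    α × Bool → α × Bool :=
  fun p => if hx : p.1 = a then (a, !p.2)
    else ((G (⟨p.1, hx⟩, p.2)).1.1, (G (⟨p.1, hx⟩, p.2)).2)

def ext1C (a : α) (q : Fin k) (D : {x : α // x ≠ a} × Bool → Fin k) : α × Bool → Fin k :=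
  fun p => if hx : p.1 = a then q else D (⟨p.1, hx⟩, p.2)

lemma ext1_cond {a : α} {G} {D : {x : α // x ≠ a} × Bool → Fin k} {q : Fin k}
    (hM : MCond tw k (G, D)) : MCond tw k (ext1F a G, ext1C a q D) := by
  obtain ⟨g1, g2, g3, g4, g5⟩ := hM
  simp only [MCond] at g1 g2 g3 g4 g5 ⊢
  have htw : ∀ (y : {x : α // x ≠ a}) (b : Bool),
      G (y, !b) = ((G (y, b)).1, !(G (y, b)).2) := by
    intro y b
    have := g4 (y, b)
    simpa [tw] using this
  refine ⟨fun y => ?_, fun y hy => ?_, fun y => ?_, fun y => ?_, fun y => ?_⟩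
  · obtain ⟨x, b⟩ := y
    by_cases hx : x = a
    · subst hx; simp [ext1F]
    · simp [ext1F, hx, sub_ne, g1]
  · obtain ⟨x, b⟩ := y
    by_cases hx : x = a
    · subst hx; simp [ext1F] at hy
    · simp only [ext1F] at hy
      rw [dif_neg hx] at hy
      simp only [Prod.mk.injEq] at hy
      exact g2 (⟨x, hx⟩, b) (Prod.ext_iff.mpr ⟨Subtype.ext hy.1, hy.2⟩)
  · obtain ⟨x, b⟩ := y
    by_cases hx : x = a
    · subst hx; simp [ext1F, ext1C]
    · simp [ext1F, ext1C, hx, sub_ne, g3]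
  · obtain ⟨x, b⟩ := y
    by_cases hx : x = a
    · subst hx; simp [ext1F, tw]
    · simp [ext1F, tw, hx, sub_ne, htw]
  · obtain ⟨x, b⟩ := y
    by_cases hx : x = a
    · subst hx; simp [ext1C, tw]
    · have := g5 (⟨x, hx⟩, b)
      simp only [tw] at this
      simp [ext1C, tw, hx, this]

end Ext1
section Ext2
variable {k : ℕ} {α : Type*} [DecidableEq α]

omit [DecidableEq α] in
lemma sub_ne2a {a : α} {b0 : {x : α // x ≠ a}} (y : {x : α // x ≠ a ∧ x ≠ b0.1}) :
    ((y : α) = a) ↔ False := by simp [y.2.1]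

omit [DecidableEq α] in
lemma sub_ne2b {a : α} {b0 : {x : α // x ≠ a}} (y : {x : α // x ≠ a ∧ x ≠ b0.1}) :
    ((y : α) = b0.1) ↔ False := by simp [y.2.2]

def ext2F (a : α) (b0 : {x : α // x ≠ a}) (t : Bool)
    (G : {x : α // x ≠ a ∧ x ≠ b0.1} × Bool → {x : α // x ≠ a ∧ x ≠ b0.1} × Bool) :
    α × Bool → α × Bool :=
  fun p => if hx : p.1 = a then (b0.1, xor p.2 t)
    else if hb : p.1 = b0.1 then (a, xor p.2 t)
    else ((G (⟨p.1, hx, hb⟩, p.2)).1.1, (G (⟨p.1, hx, hb⟩, p.2)).2)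

def ext2C (a : α) (b0 : {x : α // x ≠ a}) (q : Fin k)
    (D : {x : α // x ≠ a ∧ x ≠ b0.1} × Bool → Fin k) : α × Bool → Fin k :=
  fun p => if hx : p.1 = a then q
    else if hb : p.1 = b0.1 then q
    else D (⟨p.1, hx, hb⟩, p.2)

lemma ext2_cond {a : α} {b0 : {x : α // x ≠ a}} {t : Bool} {q : Fin k} {G}
    {D : {x : α // x ≠ a ∧ x ≠ b0.1} × Bool → Fin k}
    (hM : MCond tw k (G, D)) : MCond tw k (ext2F a b0 t G, ext2C a b0 q D) := by
  obtain ⟨g1, g2, g3, g4, g5⟩ := hM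
  simp only [MCond] at g1 g2 g3 g4 g5 ⊢
  have hba : ¬ (b0.1 = a) := b0.2
  have htw : ∀ (y : {x : α // x ≠ a ∧ x ≠ b0.1}) (b : Bool),
      G (y, !b) = ((G (y, b)).1, !(G (y, b)).2) := by
    intro y b
    have := g4 (y, b)
    simpa [tw] using this
  refine ⟨fun y => ?_, fun y hy => ?_, fun y => ?_, fun y => ?_, fun y => ?_⟩
  · obtain ⟨x, b⟩ := y
    by_cases hx : x = a
    · subst hx; simp [ext2F, hba]
    · by_cases hb : x = b0.1
      · subst hb; simp [ext2F, hba]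
      · simp [ext2F, hx, hb, sub_ne2a, sub_ne2b, g1]
  · obtain ⟨x, b⟩ := y
    by_cases hx : x = a
    · subst hx
      have hab : ¬ (x = (b0.1 : α)) := fun hh => hba hh.symm
      simp [ext2F, hba, hab] at hy
    · by_cases hb : x = b0.1
      · subst hb
        have hab : ¬ (a = (b0.1 : α)) := fun hh => hba hh.symm
        simp [ext2F, hba, hab, hx] at hy
      · simp only [ext2F] at hy
        rw [dif_neg hx, dif_neg hb] at hy
        simp only [Prod.mk.injEq] at hy
        exact g2 (⟨x, hx, hb⟩, b) (Prod.ext_iff.mpr ⟨Subtype.ext hy.1, hy.2⟩)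
  · obtain ⟨x, b⟩ := y
    by_cases hx : x = a
    · subst hx; simp [ext2F, ext2C, hba]
    · by_cases hb : x = b0.1
      · subst hb; simp [ext2F, ext2C, hba]
      · simp [ext2F, ext2C, hx, hb, sub_ne2a, sub_ne2b, g3]
  · obtain ⟨x, b⟩ := y
    by_cases hx : x = a
    · subst hx; simp [ext2F, tw, hba]
    · by_cases hb : x = b0.1
      · subst hb; simp [ext2F, tw, hba, hx]
      · simp [ext2F, tw, hx, hb, sub_ne2a, sub_ne2b, htw]
  · obtain ⟨x, b⟩ := y
    by_cases hx : x = a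
    · subst hx; simp [ext2C, tw]
    · by_cases hb : x = b0.1
      · subst hb; simp [ext2C, tw, hx]
      · have := g5 (⟨x, hx, hb⟩, b)
        simp only [tw] at this
        simp [ext2C, tw, hx, hb, this]

end Ext2
section Classify
variable {k : ℕ} {α : Type*} [DecidableEq α] {a : α}

omit [DecidableEq α] in
lemma Fa_vals {fc : (α × Bool → α × Bool) × (α × Bool → Fin k)} (hM : MCond tw k fc)
    (hfa : (fc.1 (a, false)).1 = a) :
    fc.1 (a, false) = (a, true) ∧ fc.1 (a, true) = (a, false) := by
  obtain ⟨h1, h2, h3, h4, h5⟩ := hM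
  have e : fc.1 (a, false) = (a, (fc.1 (a, false)).2) := Prod.ext_iff.mpr ⟨hfa, rfl⟩
  have e1 : fc.1 (a, false) = (a, true) := by
    rcases hsnd : (fc.1 (a, false)).2 with _ | _
    · exact absurd (by rw [e, hsnd]) (h2 (a, false))
    · rw [e, hsnd]
  have e2 : fc.1 (a, true) = (a, false) := by
    have := h4 (a, false)
    rw [show tw ((a : α), false) = (a, true) from rfl, e1] at this
    rw [this]
    rfl
  exact ⟨e1, e2⟩

omit [DecidableEq α] in
lemma clA {fc : (α × Bool → α × Bool) × (α × Bool → Fin k)} (hM : MCond tw k fc)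
    (hfa : (fc.1 (a, false)).1 = a) :
    ∀ (x : α) (b : Bool), x ≠ a → (fc.1 (x, b)).1 ≠ a := by
  obtain ⟨e1, e2⟩ := Fa_vals hM hfa
  obtain ⟨h1, h2, h3, h4, h5⟩ := hM
  intro x b hx hcon
  have e : fc.1 (x, b) = (a, (fc.1 (x, b)).2) := Prod.ext_iff.mpr ⟨hcon, rfl⟩
  have : (x, b) = fc.1 (a, (fc.1 (x, b)).2) := by rw [← e, h1]
  rcases hsnd : (fc.1 (x, b)).2 with _ | _ <;> rw [hsnd] at this
  · rw [e1] at this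
    exact hx (congrArg Prod.fst this)
  · rw [e2] at this
    exact hx (congrArg Prod.fst this)

omit [DecidableEq α] in
lemma Fb_vals {fc : (α × Bool → α × Bool) × (α × Bool → Fin k)} (hM : MCond tw k fc)
    {v : α} {t : Bool} (hfb : fc.1 (a, false) = (v, t)) :
    fc.1 (a, true) = (v, !t) ∧ (∀ c, fc.1 (v, c) = (a, xor c t)) ∧
      (∀ c, fc.2 (v, c) = fc.2 (a, false)) := by
  obtain ⟨h1, h2, h3, h4, h5⟩ := hM
  have e1 : fc.1 (a, true) = (v, !t) := by
    have := h4 (a, false)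
    rw [show tw ((a : α), false) = (a, true) from rfl, hfb] at this
    rw [this]
    rfl
  have e2 : fc.1 (v, t) = (a, false) := by rw [← hfb, h1]
  have e3 : fc.1 (v, !t) = (a, true) := by rw [← e1, h1]
  have e4 : ∀ c, fc.1 (v, c) = (a, xor c t) := by
    intro c
    rcases c <;> rcases t <;> simp_all
  have e5 : ∀ c, fc.2 (v, c) = fc.2 (a, false) := by
    have c1 : fc.2 (v, t) = fc.2 (a, false) := by rw [← hfb, h3]
    have c2 : fc.2 (v, !t) = fc.2 (a, false) := by
      rw [show ((v : α), !t) = tw (v, t) from rfl, h5, c1]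
    intro c
    rcases c <;> rcases t <;> simp_all
  exact ⟨e1, e4, e5⟩

omit [DecidableEq α] in
lemma clB {fc : (α × Bool → α × Bool) × (α × Bool → Fin k)} (hM : MCond tw k fc)
    {v : α} {t : Bool} (hfb : fc.1 (a, false) = (v, t)) (hva : v ≠ a) :
    ∀ (x : α) (b : Bool), (x ≠ a ∧ x ≠ v) → ((fc.1 (x, b)).1 ≠ a ∧ (fc.1 (x, b)).1 ≠ v) := by
  obtain ⟨e1, e4, e5⟩ := Fb_vals hM hfb
  obtain ⟨h1, h2, h3, h4, h5⟩ := hM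
  intro x b hx
  constructor
  · intro hcon
    have e : fc.1 (x, b) = (a, (fc.1 (x, b)).2) := Prod.ext_iff.mpr ⟨hcon, rfl⟩
    have heq : (x, b) = fc.1 (a, (fc.1 (x, b)).2) := by rw [← e, h1]
    rcases hsnd : (fc.1 (x, b)).2 with _ | _ <;> rw [hsnd] at heq
    · rw [hfb] at heq
      exact hx.2 (congrArg Prod.fst heq)
    · rw [e1] at heq
      exact hx.2 (congrArg Prod.fst heq)
  · intro hcon
    have e : fc.1 (x, b) = (v, (fc.1 (x, b)).2) := Prod.ext_iff.mpr ⟨hcon, rfl⟩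
    have heq : (x, b) = fc.1 (v, (fc.1 (x, b)).2) := by rw [← e, h1]
    rw [e4] at heq
    exact hx.1 (congrArg Prod.fst heq)

end Classify
section FiberEquivs
variable {k : ℕ} {α : Type*} [DecidableEq α]

def EP (a : α) :
    {s : Sg (tw (α := α)) k // (s.1.1 (a, false)).1 = a} ≃
      Fin k × Sg (tw (α := {x : α // x ≠ a})) k where
  toFun s := (s.1.1.2 (a, false),
    ⟨(restF s.1.1.1 (fun x b hx => clA s.1.2 s.2 x b hx), restC s.1.1.2),
      restrict_cond s.1.2 _⟩)
  invFun qG := ⟨⟨(ext1F a qG.2.1.1, ext1C a qG.1 qG.2.1.2), ext1_cond qG.2.2⟩, by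
    simp [ext1F]⟩
  left_inv s := by
    obtain ⟨⟨⟨F, C⟩, hM⟩, hP⟩ := s
    have hP' : (F (a, false)).1 = a := hP
    obtain ⟨e1, e2⟩ := Fa_vals hM hP'
    obtain ⟨h1, h2, h3, h4, h5⟩ := hM
    dsimp only at e1 e2 h1 h2 h3 h4 h5
    have hC : C (a, true) = C (a, false) := by
      have := h5 ((a : α), false)
      rw [show tw ((a : α), false) = (a, true) from rfl] at this
      exact this
    apply Subtype.ext
    apply Subtype.ext
    apply Prod.ext_iff.mpr
    constructor
    · funext p
      obtain ⟨x, b⟩ := p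
      by_cases hx : x = a
      · subst hx
        rcases b
        · simp only [ext1F]
          rw [dif_pos trivial, e1]
          simp
        · simp only [ext1F]
          rw [dif_pos trivial, e2]
          simp
      · simp only [ext1F]
        rw [dif_neg hx]
        rfl
    · funext p
      obtain ⟨x, b⟩ := p
      by_cases hx : x = a
      · subst hx
        rcases b
        · simp only [ext1C]
          rw [dif_pos trivial]
        · simp only [ext1C]
          rw [dif_pos trivial]
          exact hC.symm
      · simp only [ext1C]
        rw [dif_neg hx]
        rfl
  right_inv qG := by
    obtain ⟨q, ⟨⟨G, D⟩, hGD⟩⟩ := qG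
    apply Prod.ext_iff.mpr
    constructor
    · simp [ext1C]
    · apply Subtype.ext
      apply Prod.ext_iff.mpr
      constructor
      · funext y
        obtain ⟨⟨x, hx⟩, b⟩ := y
        simp only [restF]
        refine Prod.ext_iff.mpr ⟨Subtype.ext ?_, ?_⟩ <;> simp [ext1F, hx]
      · funext y
        obtain ⟨⟨x, hx⟩, b⟩ := y
        simp [restC, ext1C, hx]

def EF (a : α) (b0 : {x : α // x ≠ a}) (t : Bool) :
    {s : Sg (tw (α := α)) k // s.1.1 (a, false) = ((b0 : α), t)} ≃
      Fin k × Sg (tw (α := {x : α // x ≠ a ∧ x ≠ (b0 : α)})) k where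
  toFun s := (s.1.1.2 (a, false),
    ⟨(restF s.1.1.1 (fun x b hx => clB s.1.2 s.2 b0.2 x b hx), restC s.1.1.2),
      restrict_cond s.1.2 _⟩)
  invFun qG := ⟨⟨(ext2F a b0 t qG.2.1.1, ext2C a b0 qG.1 qG.2.1.2), ext2_cond qG.2.2⟩, by
    simp [ext2F]⟩
  left_inv s := by
    obtain ⟨⟨⟨F, C⟩, hM⟩, hP⟩ := s
    have hP' : F (a, false) = ((b0 : α), t) := hP
    obtain ⟨e1, e4, e5⟩ := Fb_vals hM hP'
    obtain ⟨h1, h2, h3, h4, h5⟩ := hM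
    dsimp only at e1 e4 e5 h1 h2 h3 h4 h5
    have hC : C (a, true) = C (a, false) := by
      have := h5 ((a : α), false)
      rw [show tw ((a : α), false) = (a, true) from rfl] at this
      exact this
    apply Subtype.ext
    apply Subtype.ext
    apply Prod.ext_iff.mpr
    constructor
    · funext p
      obtain ⟨x, b⟩ := p
      by_cases hx : x = a
      · subst hx
        rcases b
        · simp only [ext2F]
          rw [dif_pos trivial, hP']
          simp
        · simp only [ext2F]
          rw [dif_pos trivial, e1]
          simp
      · by_cases hb : x = (b0 : α)
        · subst hb
          simp only [ext2F]
          rw [dif_neg hx, dif_pos trivial, e4]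
        · simp only [ext2F]
          rw [dif_neg hx, dif_neg hb]
          rfl
    · funext p
      obtain ⟨x, b⟩ := p
      by_cases hx : x = a
      · subst hx
        rcases b
        · simp only [ext2C]
          rw [dif_pos trivial]
        · simp only [ext2C]
          rw [dif_pos trivial]
          exact hC.symm
      · by_cases hb : x = (b0 : α)
        · subst hb
          simp only [ext2C]
          rw [dif_neg hx, dif_pos trivial]
          exact (e5 b).symm
        · simp only [ext2C]
          rw [dif_neg hx, dif_neg hb]
          rfl
  right_inv qG := by
    obtain ⟨q, ⟨⟨G, D⟩, hGD⟩⟩ := qG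
    apply Prod.ext_iff.mpr
    constructor
    · simp [ext2C]
    · apply Subtype.ext
      apply Prod.ext_iff.mpr
      constructor
      · funext y
        obtain ⟨⟨x, hx⟩, b⟩ := y
        simp only [restF]
        refine Prod.ext_iff.mpr ⟨Subtype.ext ?_, ?_⟩ <;> simp [ext2F, hx.1, hx.2]
      · funext y
        obtain ⟨⟨x, hx⟩, b⟩ := y
        simp [restC, ext2C, hx.1, hx.2]

end FiberEquivs
section Count

lemma nat_card_sigma {ι : Type*} [Fintype ι] (π : ι → Type*) [∀ i, Finite (π i)] :
    Nat.card (Σ i, π i) = ∑ i : ι, Nat.card (π i) := by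
  letI : ∀ i, Fintype (π i) := fun i => Fintype.ofFinite _
  rw [Nat.card_eq_fintype_card, Fintype.card_sigma]
  exact Finset.sum_congr rfl fun i _ => (Nat.card_eq_fintype_card).symm

lemma card_ne' {α : Type*} [Fintype α] [DecidableEq α] (a : α) :
    Fintype.card {x : α // x ≠ a} = Fintype.card α - 1 := by
  have h : Fintype.card {x : α // x ≠ a} = Fintype.card {x : α // ¬ (x = a)} := rfl
  rw [h, Fintype.card_subtype_compl, Fintype.card_subtype_eq]

lemma card_ne2' {α : Type*} [Fintype α] [DecidableEq α] (a : α) (b0 : {x : α // x ≠ a}) :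
    Fintype.card {x : α // x ≠ a ∧ x ≠ (b0 : α)} = Fintype.card α - 2 := by
  rw [Fintype.card_subtype]
  have h : Finset.filter (fun x => x ≠ a ∧ x ≠ (b0 : α)) Finset.univ
      = Finset.univ \ {a, (b0 : α)} := by
    ext x
    simp only [Finset.mem_filter, Finset.mem_univ, true_and, Finset.mem_sdiff,
      Finset.mem_insert, Finset.mem_singleton]
    tauto
  rw [h, Finset.card_sdiff_of_subset (by simp), Finset.card_univ]
  congr 1
  rw [Finset.card_insert_of_notMem (by simp [Ne.symm b0.2]), Finset.card_singleton]

def fMap {k : ℕ} {α : Type*} [DecidableEq α] (a : α) :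
    {s : Sg (tw (α := α)) k // ¬ (s.1.1 (a, false)).1 = a} → {x : α // x ≠ a} × Bool :=
  fun s => (⟨(s.1.1.1 (a, false)).1, s.2⟩, (s.1.1.1 (a, false)).2)

theorem card_Sg (k : ℕ) : ∀ (m : ℕ) (α : Type) [Fintype α] [DecidableEq α],
    Fintype.card α = m → Nat.card (Sg (tw (α := α)) k) = A k m := by
  intro m
  induction m using Nat.strong_induction_on with
  | _ m IH =>
    intro α _ _ hcard
    rcases Nat.eq_zero_or_pos m with hm | hm
    · haveI : IsEmpty α := Fintype.card_eq_zero_iff.mp (by omega)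
      have h1 : Nat.card (Sg (tw (α := α)) k) = 1 := by
        rw [Nat.card_eq_one_iff_unique]
        constructor
        · constructor
          intro s t
          apply Subtype.ext
          apply Prod.ext_iff.mpr
          constructor <;> funext x <;> exact isEmptyElim x.1
        · exact ⟨⟨(fun x => isEmptyElim x.1, fun x => isEmptyElim x.1),
            fun x => isEmptyElim x.1, fun x => isEmptyElim x.1, fun x => isEmptyElim x.1,
            fun x => isEmptyElim x.1, fun x => isEmptyElim x.1⟩⟩
      rw [h1, hm, A_zero]
    · have hne : Nonempty α := Fintype.card_pos_iff.mp (by omega)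
      obtain ⟨a⟩ := hne
      have hsplit : Nat.card (Sg (tw (α := α)) k)
          = Nat.card {s : Sg (tw (α := α)) k // (s.1.1 (a, false)).1 = a}
            + Nat.card {s : Sg (tw (α := α)) k // ¬ (s.1.1 (a, false)).1 = a} := by
        rw [← Nat.card_sum]
        exact Nat.card_congr (Equiv.sumCompl (fun s : Sg (tw (α := α)) k =>
          (s.1.1 (a, false)).1 = a)).symm
      have h1 : Nat.card {s : Sg (tw (α := α)) k // (s.1.1 (a, false)).1 = a}
          = k * A k (m - 1) := by
        rw [Nat.card_congr (EP a), Nat.card_prod, Nat.card_eq_fintype_card, Fintype.card_fin]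
        congr 1
        exact IH (m - 1) (by omega) _ (by rw [card_ne', hcard])
      have h2 : Nat.card {s : Sg (tw (α := α)) k // ¬ (s.1.1 (a, false)).1 = a}
          = (2 * (m - 1)) * (k * A k (m - 2)) := by
        have hfib : ∀ v : {x : α // x ≠ a} × Bool,
            Nat.card {s' // fMap (k := k) a s' = v} = k * A k (m - 2) := by
          intro v
          have e : {s' // fMap (k := k) a s' = v} ≃
              {s : Sg (tw (α := α)) k // s.1.1 (a, false) = ((v.1 : α), v.2)} :=
            { toFun := fun u => ⟨u.1.1, by
                have hu1 := congrArg (fun z : {x : α // x ≠ a} × Bool => (z.1 : α)) u.2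
                have hu2 := congrArg (fun z : {x : α // x ≠ a} × Bool => z.2) u.2
                exact Prod.ext_iff.mpr ⟨hu1, hu2⟩⟩
              invFun := fun s => ⟨⟨s.1, by
                  rw [show (s.1.1.1 (a, false)).1 = (v.1 : α) from congrArg Prod.fst s.2]
                  exact v.1.2⟩, by
                apply Prod.ext
                · apply Subtype.ext
                  show (s.1.1.1 (a, false)).1 = (v.1 : α)
                  exact congrArg Prod.fst s.2
                · show (s.1.1.1 (a, false)).2 = v.2
                  exact congrArg Prod.snd s.2⟩
              left_inv := fun u => Subtype.ext (Subtype.ext rfl)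
              right_inv := fun s => Subtype.ext rfl }
          rw [Nat.card_congr e, Nat.card_congr (EF a v.1 v.2), Nat.card_prod,
            Nat.card_eq_fintype_card, Fintype.card_fin]
          congr 1
          exact IH (m - 2) (by omega) _ (by rw [card_ne2', hcard])
        rw [Nat.card_congr (Equiv.sigmaFiberEquiv (fMap (k := k) a)).symm, nat_card_sigma]
        rw [Finset.sum_congr rfl (fun v _ => hfib v), Finset.sum_const, Finset.card_univ]
        rw [Fintype.card_prod, Fintype.card_bool, card_ne', hcard, smul_eq_mul]
        ring
      rw [hsplit, h1, h2]
      by_cases hm1 : m = 1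
      · subst hm1
        simp [A_zero, A_one]
      · obtain ⟨m', rfl⟩ : ∃ m', m = m' + 2 := ⟨m - 2, by omega⟩
        rw [show m' + 2 - 1 = m' + 1 by omega, show m' + 2 - 2 = m' by omega, A_rec]
        ring

end Count
section E2sec
variable {k : ℕ} {α : Type*}

def projF (F : (α × Bool) ⊕ Bool → (α × Bool) ⊕ Bool) : α × Bool → α × Bool :=
  fun x => (F (Sum.inl x)).elim id (fun _ => x)

lemma E2_facts {F : (α × Bool) ⊕ Bool → (α × Bool) ⊕ Bool} {C : (α × Bool) ⊕ Bool → Fin k}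
    (hM : MCond (Sum.map (tw (α := α)) id) k (F, C)) :
    F (Sum.inr false) = Sum.inr true ∧ F (Sum.inr true) = Sum.inr false ∧
      ∀ x, F (Sum.inl x) = Sum.inl (projF F x) := by
  obtain ⟨h1, h2, h3, h4, h5⟩ := hM
  dsimp only at h1 h2 h3 h4 h5
  have hr_false : F (Sum.inr false) = Sum.inr true := by
    have h := h4 (Sum.inr false)
    rw [show (Sum.map (tw (α := α)) id) (Sum.inr false) = Sum.inr false from rfl] at h
    rcases hv : F (Sum.inr false) with p | c
    · rw [hv] at h
      rw [show (Sum.map (tw (α := α)) id) (Sum.inl p) = Sum.inl (tw p) from rfl] at h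
      have : p = tw p := Sum.inl.inj h
      exact absurd this.symm (by simp [tw, Prod.ext_iff])
    · rcases c
      · exact absurd hv (h2 (Sum.inr false))
      · rfl
  have hr_true : F (Sum.inr true) = Sum.inr false := by
    have := h1 (Sum.inr false)
    rw [hr_false] at this
    exact this
  refine ⟨hr_false, hr_true, fun x => ?_⟩
  rcases hv : F (Sum.inl x) with y | c
  · simp [projF, hv]
  · exfalso
    have := h1 (Sum.inl x)
    rw [hv] at this
    rcases c
    · rw [hr_false] at this
      cases this
    · rw [hr_true] at this
      cases this

lemma E2to_cond {F : (α × Bool) ⊕ Bool → (α × Bool) ⊕ Bool} {C : (α × Bool) ⊕ Bool → Fin k}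
    (hM : MCond (Sum.map (tw (α := α)) id) k (F, C)) :
    MCond tw k (projF F, fun x => C (Sum.inl x)) := by
  obtain ⟨hrf, hrt, hinl⟩ := E2_facts hM
  obtain ⟨h1, h2, h3, h4, h5⟩ := hM
  dsimp only at h1 h2 h3 h4 h5
  refine ⟨fun x => ?_, fun x hx => ?_, fun x => ?_, fun x => ?_, fun x => ?_⟩
  · apply Sum.inl.inj (α := α × Bool) (β := Bool)
    rw [← hinl, ← hinl, h1]
  · have hx' : projF F x = x := hx
    have := hinl x
    rw [hx'] at this
    exact h2 (Sum.inl x) this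
  · have := h3 (Sum.inl x)
    rw [hinl x] at this
    exact this
  · apply Sum.inl.inj (α := α × Bool) (β := Bool)
    rw [← hinl]
    have := h4 (Sum.inl x)
    rw [show (Sum.map (tw (α := α)) id) (Sum.inl x) = Sum.inl (tw x) from rfl, hinl x] at this
    rw [this]
    rfl
  · have := h5 (Sum.inl x)
    rw [show (Sum.map (tw (α := α)) id) (Sum.inl x) = Sum.inl (tw x) from rfl] at this
    exact this

lemma E2inv_cond {G : α × Bool → α × Bool} {D : α × Bool → Fin k} {q : Fin k}
    (hM : MCond tw k (G, D)) :
    MCond (Sum.map (tw (α := α)) id) k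
      (Sum.elim (fun x => Sum.inl (G x)) (fun c => Sum.inr (!c)),
       Sum.elim D (fun _ => q)) := by
  obtain ⟨g1, g2, g3, g4, g5⟩ := hM
  dsimp only at g1 g2 g3 g4 g5
  refine ⟨fun u => ?_, fun u hu => ?_, fun u => ?_, fun u => ?_, fun u => ?_⟩
  · rcases u with x | c
    · simp [g1]
    · simp
  · rcases u with x | c
    · simp only [Sum.elim_inl] at hu
      exact g2 x (Sum.inl.inj hu)
    · simp only [Sum.elim_inr] at hu
      have := Sum.inr.inj hu
      simp at this
  · rcases u with x | c
    · simp [g3]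
    · simp
  · rcases u with x | c
    · simp [g4]
    · simp
  · rcases u with x | c
    · simp [g5]
    · simp

def E2 : Sg (Sum.map (tw (α := α)) (id : Bool → Bool)) k ≃ Fin k × Sg (tw (α := α)) k where
  toFun s := (s.1.2 (Sum.inr false),
    ⟨(projF s.1.1, fun x => s.1.2 (Sum.inl x)), E2to_cond s.2⟩)
  invFun qs := ⟨(Sum.elim (fun x => Sum.inl (qs.2.1.1 x)) (fun c => Sum.inr (!c)),
    Sum.elim qs.2.1.2 (fun _ => qs.1)), E2inv_cond qs.2.2⟩
  left_inv s := by
    obtain ⟨⟨F, C⟩, hM⟩ := s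
    obtain ⟨hrf, hrt, hinl⟩ := E2_facts hM
    obtain ⟨h1, h2, h3, h4, h5⟩ := hM
    dsimp only at h1 h2 h3 h4 h5
    apply Subtype.ext
    apply Prod.ext_iff.mpr
    constructor
    · funext u
      rcases u with x | c
      · simp [(hinl x).symm]
      · rcases c
        · simp [hrf.symm]
        · simp [hrt.symm]
    · funext u
      rcases u with x | c
      · simp
      · rcases c
        · simp
        · have := h3 (Sum.inr false)
          rw [hrf] at this
          simpa using this.symm
  right_inv qs := by
    obtain ⟨q, ⟨⟨G, D⟩, hGD⟩⟩ := qs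
    apply Prod.ext_iff.mpr
    constructor
    · simp
    · apply Subtype.ext
      apply Prod.ext_iff.mpr
      constructor
      · funext x
        simp [projF]
      · funext x
        simp

end E2sec
section ZModPart

lemma helper_zero {N a : ℕ} [NeZero N] (h : ((a : ℕ) : ZMod N) = 0) (h1 : 0 < a)
    (h2 : a < N) : False := by
  rw [ZMod.natCast_eq_zero_iff] at h
  have := Nat.le_of_dvd h1 h
  omega

lemma helper_eq {N a b : ℕ} [NeZero N] (h : ((a : ℕ) : ZMod N) = ((b : ℕ) : ZMod N))
    (ha : a < N) (hb : b < N) : a = b := by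
  have := congrArg ZMod.val h
  rwa [ZMod.val_cast_of_lt ha, ZMod.val_cast_of_lt hb] at this

/-- the transversal bijection in the odd case, `h = 2s+1`. -/
noncomputable def psiOdd (n s : ℕ) (hn : 1 ≤ n) (hs : s < n) :
    Fin n × Bool ≃ ZMod (2 * n) := by
  haveI : NeZero (2 * n) := ⟨by omega⟩
  refine Equiv.ofBijective
    (fun p => if p.2 then (s : ZMod (2 * n)) - (p.1 : ℕ) else (s : ZMod (2 * n)) + 1 + (p.1 : ℕ))
    ((Fintype.bijective_iff_injective_and_card _).mpr ⟨?_, by simp [ZMod.card]; omega⟩)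
  rintro ⟨i, bi⟩ ⟨j, bj⟩ heq
  have hi := i.2
  have hj := j.2
  rcases bi <;> rcases bj <;> simp only [if_true, if_false, Bool.false_eq_true] at heq
  · -- false false
    have h : (((1 + (i : ℕ)) : ℕ) : ZMod (2 * n)) = (((1 + (j : ℕ)) : ℕ) : ZMod (2 * n)) := by
      push_cast
      linear_combination heq
    have := helper_eq h (by omega) (by omega)
    have : (i : ℕ) = (j : ℕ) := by omega
    simp [Prod.ext_iff, Fin.ext_iff, this]
  · -- false true
    exfalso
    have h : ((((i : ℕ) + (j : ℕ) + 1) : ℕ) : ZMod (2 * n)) = 0 := by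
      push_cast
      linear_combination heq
    exact helper_zero h (by omega) (by omega)
  · -- true false
    exfalso
    have h : ((((i : ℕ) + (j : ℕ) + 1) : ℕ) : ZMod (2 * n)) = 0 := by
      push_cast
      linear_combination - heq
    exact helper_zero h (by omega) (by omega)
  · -- true true
    have h : (((i : ℕ)) : ZMod (2 * n)) = (((j : ℕ)) : ZMod (2 * n)) := by
      linear_combination - heq
    have := helper_eq h (by omega) (by omega)
    simp [Prod.ext_iff, Fin.ext_iff, this]

lemma psiOdd_tw (n s : ℕ) (hn : 1 ≤ n) (hs : s < n) (p : Fin n × Bool) :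
    psiOdd n s hn hs (tw p) = ((2 * s + 1 : ℕ) : ZMod (2 * n)) - psiOdd n s hn hs p := by
  obtain ⟨i, b⟩ := p
  rcases b <;> simp only [psiOdd, tw, Equiv.ofBijective_apply, Bool.not_false, Bool.not_true,
    if_true, if_false, Bool.false_eq_true] <;> push_cast <;> ring

/-- the natural-number labels in the even case. -/
def evLab (n : ℕ) : (Fin (n - 1) × Bool) ⊕ Bool → ℕ
  | Sum.inl (i, false) => 1 + (i : ℕ)
  | Sum.inl (i, true) => 2 * n - 1 - (i : ℕ)
  | Sum.inr false => 0
  | Sum.inr true => n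

/-- the transversal bijection in the even case, `h = 2s`. -/
noncomputable def psiEven (n s : ℕ) (hn : 1 ≤ n) (hs : s < n) :
    ((Fin (n - 1) × Bool) ⊕ Bool) ≃ ZMod (2 * n) := by
  haveI : NeZero (2 * n) := ⟨by omega⟩
  refine Equiv.ofBijective
    (fun u => (s : ZMod (2 * n)) + ((evLab n u : ℕ) : ZMod (2 * n)))
    ((Fintype.bijective_iff_injective_and_card _).mpr ⟨?_, by simp [ZMod.card]; omega⟩)
  intro u v heq
  have hL : ((evLab n u : ℕ) : ZMod (2 * n)) = ((evLab n v : ℕ) : ZMod (2 * n)) := by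
    linear_combination heq
  have hb : ∀ w, evLab n w < 2 * n := by
    rintro (⟨i, (_ | _)⟩ | (_ | _)) <;> simp [evLab] <;> omega
  have hE : evLab n u = evLab n v := helper_eq hL (hb u) (hb v)
  rcases u with ⟨i, (_ | _)⟩ | (_ | _) <;> rcases v with ⟨j, (_ | _)⟩ | (_ | _) <;>
    simp only [evLab] at hE <;>
    first
      | rfl
      | (exfalso; have hi2 := i.2; have hj2 := j.2; omega)
      | (exfalso; have hi2 := i.2; omega)
      | (exfalso; have hj2 := j.2; omega)
      | (exfalso; omega)
      | (have hi2 := i.2; have hj2 := j.2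
         have : (i : ℕ) = (j : ℕ) := by omega
         simp [Prod.ext_iff, Fin.ext_iff, this])

lemma psiEven_tw (n s : ℕ) (hn : 1 ≤ n) (hs : s < n)
    (u : (Fin (n - 1) × Bool) ⊕ Bool) :
    psiEven n s hn hs (Sum.map tw (id : Bool → Bool) u)
      = ((2 * s : ℕ) : ZMod (2 * n)) - psiEven n s hn hs u := by
  haveI : NeZero (2 * n) := ⟨by omega⟩
  have h2n : ((2 * n : ℕ) : ZMod (2 * n)) = 0 := by
    simp [ZMod.natCast_self]
  rcases u with ⟨i, (_ | _)⟩ | (_ | _) <;>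
    simp only [psiEven, Sum.map_inl, Sum.map_inr, tw, Equiv.ofBijective_apply, evLab,
      Bool.not_false, Bool.not_true, id_eq]
  · -- inl (i, false) : σ gives inl (i, true): label 2n-1-i
    have hi2 := i.2
    have hcast : ((2 * n - 1 - (i : ℕ) : ℕ) : ZMod (2 * n))
        = ((2 * n : ℕ) : ZMod (2 * n)) - ((1 + (i : ℕ) : ℕ) : ZMod (2 * n)) := by
      rw [← Nat.cast_sub (by omega)]
      congr 1
      omega
    rw [hcast, h2n]
    push_cast
    ring
  · have hi2 := i.2
    have hcast : ((2 * n - 1 - (i : ℕ) : ℕ) : ZMod (2 * n))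
        = ((2 * n : ℕ) : ZMod (2 * n)) - ((1 + (i : ℕ) : ℕ) : ZMod (2 * n)) := by
      rw [← Nat.cast_sub (by omega)]
      congr 1
      omega
    rw [hcast, h2n]
    push_cast
    ring
  · push_cast
    ring
  · push_cast
    push_cast at h2n
    linear_combination h2n

end ZModPart

/-- Let `n, k ≥ 1` and `h ∈ {0,…,2n-1}`.  The number of `k`-colored perfect matchings
`(f, c)` on `ℤ/2nℤ` satisfying `f(h - x) = h - f(x)` and `c(h - x) = c(x)` for all `x`
equals `Σ_{j=0}^{⌊n/2⌋} ma(n, j)·2^j·k^{n-j}` if `h` is odd, and equals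
`Σ_{j=0}^{⌊(n-1)/2⌋} ma(n-1, j)·2^j·k^{n-j}` if `h` is even. -/
theorem stmt_18 (n k : ℕ) (hn : 1 ≤ n) (hk : 1 ≤ k) (h : ℕ) (hh : h < 2 * n) :
    Nat.card {fc : (ZMod (2 * n) → ZMod (2 * n)) × (ZMod (2 * n) → Fin k) //
      (∀ x, fc.1 (fc.1 x) = x) ∧ (∀ x, fc.1 x ≠ x) ∧ (∀ x, fc.2 (fc.1 x) = fc.2 x) ∧
      (∀ x, fc.1 ((h : ZMod (2 * n)) - x) = (h : ZMod (2 * n)) - fc.1 x) ∧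
      (∀ x, fc.2 ((h : ZMod (2 * n)) - x) = fc.2 x)} =
    if h % 2 = 1 then ∑ j ∈ Finset.range (n / 2 + 1), ma n j * 2 ^ j * k ^ (n - j)
    else ∑ j ∈ Finset.range ((n - 1) / 2 + 1), ma (n - 1) j * 2 ^ j * k ^ (n - j) := by
  haveI : NeZero (2 * n) := ⟨by omega⟩
  by_cases hodd : h % 2 = 1
  · rw [if_pos hodd]
    have hsn : h / 2 < n := by omega
    have hs2 : h = 2 * (h / 2) + 1 := by omega
    have he : ∀ p, psiOdd n (h / 2) hn hsn (tw p)
        = (fun x : ZMod (2 * n) => (h : ZMod (2 * n)) - x) (psiOdd n (h / 2) hn hsn p) := by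
      intro p
      rw [psiOdd_tw]
      simp only
      congr 1
      exact_mod_cast (congrArg (fun z : ℕ => (z : ZMod (2 * n))) hs2).symm
    have key : Nat.card (Sg (fun x : ZMod (2 * n) => (h : ZMod (2 * n)) - x) k) = A k n := by
      rw [Nat.card_congr (SgEquiv (psiOdd n (h / 2) hn hsn) tw
        (fun x : ZMod (2 * n) => (h : ZMod (2 * n)) - x) he)]
      exact card_Sg k n (Fin n) (by simp)
    exact key
  · rw [if_neg hodd]
    have hsn : h / 2 < n := by omega
    have hs2 : h = 2 * (h / 2) := by omega
    have he : ∀ p, psiEven n (h / 2) hn hsn (Sum.map tw (id : Bool → Bool) p)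
        = (fun x : ZMod (2 * n) => (h : ZMod (2 * n)) - x) (psiEven n (h / 2) hn hsn p) := by
      intro p
      rw [psiEven_tw]
      simp only
      congr 1
      exact_mod_cast (congrArg (fun z : ℕ => (z : ZMod (2 * n))) hs2).symm
    have key : Nat.card (Sg (fun x : ZMod (2 * n) => (h : ZMod (2 * n)) - x) k)
        = k * A k (n - 1) := by
      rw [Nat.card_congr (SgEquiv (psiEven n (h / 2) hn hsn)
        (Sum.map tw (id : Bool → Bool))
        (fun x : ZMod (2 * n) => (h : ZMod (2 * n)) - x) he)]
      rw [Nat.card_congr E2, Nat.card_prod, Nat.card_eq_fintype_card, Fintype.card_fin]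
      congr 1
      exact card_Sg k (n - 1) (Fin (n - 1)) (by simp)
    show Nat.card (Sg (fun x : ZMod (2 * n) => (h : ZMod (2 * n)) - x) k) = _
    rw [key, A, Finset.mul_sum]
    apply Finset.sum_congr rfl
    intro j hj
    rw [Finset.mem_range] at hj
    rw [show n - j = (n - 1 - j) + 1 by omega, pow_succ]
    ring
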